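/- Let α ∈ ℝ^{n×n} be a symmetric positive definite matrix and θ = (θ_{jkℓ}) ∈ ℝ^{n×n×n} an array with antisymmetric sections (θ_{jkℓ} = −θ_{kjℓ} for all j,k,ℓ) satisfying Σ_{ℓ=1}^n (α_{ℓs} θ_{jkℓ} − α_{jℓ} θ_{ksℓ}) = 0 for all j,k,s. Then for every vector E ∈ ℝ^n, every complex eigenvalue of the matrix A_0 ∈ ℝ^{n×n} with entries (A_0)_{jℓ} = 2 Σ_{k=1}^n θ_{jkℓ} E_k has zero real part, i.e. the spectrum of A_0 is contained in the imaginary axis iℝ. -/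

import Mathlib

open Matrix Complex Finset

/-- Auxiliary: the compatibility relation and antisymmetry force `A₀ * α = -(α * A₀ᵀ)`. -/
private lemma aux_key_identity {n : ℕ} (α : Matrix (Fin n) (Fin n) ℝ)
    (θ : Fin n → Fin n → Fin n → ℝ)
    (hanti : ∀ j k ℓ, θ j k ℓ = - θ k j ℓ)
    (hrel : ∀ j k s : Fin n, ∑ ℓ, (α ℓ s * θ j k ℓ - α j ℓ * θ k s ℓ) = 0)
    (E : Fin n → ℝ)
    (A₀ : Matrix (Fin n) (Fin n) ℝ)
    (hA₀ : ∀ j ℓ, A₀ j ℓ = 2 * ∑ k, θ j k ℓ * E k) :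
    A₀ * α = -(α * A₀ᵀ) := by
  ext j s
  have hrel' : ∀ k, ∑ ℓ, α ℓ s * θ j k ℓ = ∑ ℓ, α j ℓ * θ k s ℓ := by
    intro k
    have := hrel j k s
    rw [Finset.sum_sub_distrib, sub_eq_zero] at this
    exact this
  simp only [mul_apply, Matrix.neg_apply, transpose_apply, hA₀]
  calc ∑ ℓ, (2 * ∑ k, θ j k ℓ * E k) * α ℓ s
      = ∑ ℓ, ∑ k, 2 * (α ℓ s * θ j k ℓ) * E k := by
        refine Finset.sum_congr rfl fun ℓ _ => ?_
        rw [mul_assoc, Finset.sum_mul, Finset.mul_sum]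
        exact Finset.sum_congr rfl fun k _ => by ring
    _ = ∑ k, ∑ ℓ, 2 * (α ℓ s * θ j k ℓ) * E k := Finset.sum_comm
    _ = ∑ k, 2 * (∑ ℓ, α ℓ s * θ j k ℓ) * E k := by
        refine Finset.sum_congr rfl fun k _ => ?_
        rw [Finset.mul_sum, Finset.sum_mul]
    _ = ∑ k, 2 * (∑ ℓ, α j ℓ * θ k s ℓ) * E k := by simp_rw [hrel']
    _ = ∑ k, ∑ ℓ, 2 * (α j ℓ * θ k s ℓ) * E k := by
        refine Finset.sum_congr rfl fun k _ => ?_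
        rw [Finset.mul_sum, Finset.sum_mul]
    _ = ∑ ℓ, ∑ k, 2 * (α j ℓ * θ k s ℓ) * E k := Finset.sum_comm
    _ = -∑ ℓ, α j ℓ * (2 * ∑ k, θ s k ℓ * E k) := by
        rw [← Finset.sum_neg_distrib]
        refine Finset.sum_congr rfl fun ℓ _ => ?_
        rw [Finset.mul_sum, Finset.mul_sum, ← Finset.sum_neg_distrib]
        exact Finset.sum_congr rfl fun k _ => by rw [hanti k s ℓ]; ring

/-- Auxiliary: skew-adjointness of `β * A₀` w.r.t. a positive definite symmetric `β`
forces eigenvalues of the complexification of `A₀` to be purely imaginary. -/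
private lemma aux_eigen_imaginary {n : ℕ} (β A₀ : Matrix (Fin n) (Fin n) ℝ)
    (hβs : βᵀ = β) (hβpd : β.PosDef)
    (hSkew : (β * A₀)ᵀ = -(β * A₀)) (z : ℂ) (v : Fin n → ℂ) (hv0 : v ≠ 0)
    (heig : (A₀.map Complex.ofReal) *ᵥ v = z • v) : z.re = 0 := by
  set Mc := A₀.map Complex.ofReal with hMc
  set Bc := β.map Complex.ofReal with hBc
  set Sc := (β * A₀).map Complex.ofReal with hSc
  have hmul : Sc = Bc * Mc := by
    rw [hSc, hBc, hMc]
    exact Matrix.map_mul (f := Complex.ofRealHom)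
  have hconj : ∀ X : Matrix (Fin n) (Fin n) ℝ,
      (X.map Complex.ofReal)ᴴ = Xᵀ.map Complex.ofReal := by
    intro X
    ext j k
    simp [conjTranspose_apply, map_apply, Complex.conj_ofReal]
  have hScH : Scᴴ = -Sc := by
    rw [hSc, hconj, hSkew]
    ext j k
    simp [map_apply]
  have hBcH : Bcᴴ = Bc := by rw [hBc, hconj, hβs]
  set p := star v ⬝ᵥ Bc *ᵥ v with hp
  set q := star v ⬝ᵥ Sc *ᵥ v with hq
  have hqp : q = z * p := by
    rw [hq, hmul, ← Matrix.mulVec_mulVec, heig, Matrix.mulVec_smul, dotProduct_smul,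
      smul_eq_mul, hp]
  have hstar : ∀ (X : Matrix (Fin n) (Fin n) ℂ),
      star (star v ⬝ᵥ X *ᵥ v) = star v ⬝ᵥ Xᴴ *ᵥ v := by
    intro X
    rw [Matrix.star_dotProduct, star_star, Matrix.star_mulVec, Matrix.dotProduct_mulVec]
  have hqstar : star q = -q := by
    rw [hq, hstar, hScH, Matrix.neg_mulVec, dotProduct_neg]
  have hpstar : star p = p := by rw [hp, hstar, hBcH]
  -- positivity of p.re
  set x : Fin n → ℝ := fun j => (v j).re with hx
  set y : Fin n → ℝ := fun j => (v j).im with hy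
  have hpre : p.re = x ⬝ᵥ β *ᵥ x + y ⬝ᵥ β *ᵥ y := by
    rw [hp]
    simp only [dotProduct, mulVec, Pi.star_apply, Complex.re_sum, map_apply]
    rw [← Finset.sum_add_distrib]
    refine Finset.sum_congr rfl fun j _ => ?_
    simp only [dotProduct, Finset.mul_sum, Complex.re_sum, Finset.sum_mul]
    rw [← Finset.sum_add_distrib]
    refine Finset.sum_congr rfl fun ℓ _ => ?_
    simp [Complex.mul_re, Complex.mul_im, hx, hy, hBc, map_apply]
  have hxy : x ≠ 0 ∨ y ≠ 0 := by
    by_contra h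
    push_neg at h
    apply hv0
    funext j
    have h1 := congrFun h.1 j
    have h2 := congrFun h.2 j
    simp only [hx, hy, Pi.zero_apply] at h1 h2
    exact Complex.ext h1 h2
  have hnng : ∀ w : Fin n → ℝ, 0 ≤ w ⬝ᵥ β *ᵥ w := by
    intro w
    have := hβpd.posSemidef.dotProduct_mulVec_nonneg w
    simpa using this
  have hppos : 0 < p.re := by
    rw [hpre]
    rcases hxy with h | h
    · have := hβpd.dotProduct_mulVec_pos h
      simp only [star_trivial] at this
      linarith [hnng y]
    · have := hβpd.dotProduct_mulVec_pos h
      simp only [star_trivial] at this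
      linarith [hnng x]
  have hpne : p ≠ 0 := fun h => by simp [h] at hppos
  -- combine
  have : (star z + z) * p = 0 := by
    have h1 : star z * p = -(z * p) := by
      calc star z * p = star z * star p := by rw [hpstar]
        _ = star (z * p) := by rw [star_mul']
        _ = star q := by rw [hqp]
        _ = -q := hqstar
        _ = -(z * p) := by rw [hqp]
    rw [add_mul, h1]
    ring
  have hz2 : star z + z = 0 := by
    rcases mul_eq_zero.mp this with h | h
    · exact h
    · exact absurd h hpne
  have := congrArg Complex.re hz2
  simp only [Complex.add_re, Complex.conj_re, Complex.zero_re, RCLike.star_def] at this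
  linarith

/-- **Purely imaginary spectrum of the isolated dynamics matrix (Theorem 5.1).**
For a symmetric positive definite `α ∈ ℝ^{n×n}` and an array `θ` with antisymmetric
sections satisfying `∑ ℓ, (α ℓ s * θ j k ℓ - α j ℓ * θ k s ℓ) = 0`, every complex
eigenvalue of the matrix `A₀` with entries `(A₀) j ℓ = 2 * ∑ k, θ j k ℓ * E k`
has zero real part, for every `E ∈ ℝ^n`. -/
theorem isolated_dynamics_spectrum_imaginary
    {n : ℕ} (α : Matrix (Fin n) (Fin n) ℝ) (hαs : α.IsSymm) (hαpd : α.PosDef)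
    (θ : Fin n → Fin n → Fin n → ℝ)
    (hanti : ∀ j k ℓ, θ j k ℓ = - θ k j ℓ)
    (hrel : ∀ j k s : Fin n, ∑ ℓ, (α ℓ s * θ j k ℓ - α j ℓ * θ k s ℓ) = 0)
    (E : Fin n → ℝ)
    (A₀ : Matrix (Fin n) (Fin n) ℝ)
    (hA₀ : ∀ j ℓ, A₀ j ℓ = 2 * ∑ k, θ j k ℓ * E k) :
    ∀ z ∈ spectrum ℂ (A₀.map Complex.ofReal), z.re = 0 := by
  intro z hz
  have key : A₀ * α = -(α * A₀ᵀ) := aux_key_identity α θ hanti hrel E A₀ hA₀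
  have hdet : IsUnit α.det := (Matrix.isUnit_iff_isUnit_det α).mp hαpd.isUnit
  set β := α⁻¹ with hβ
  have hβs : βᵀ = β := by rw [hβ, Matrix.transpose_nonsing_inv, hαs.eq]
  have hβpd : β.PosDef := hαpd.inv
  have h1 : α * β = 1 := Matrix.mul_nonsing_inv α hdet
  have h2 : β * α = 1 := Matrix.nonsing_inv_mul α hdet
  have hSkew : (β * A₀)ᵀ = -(β * A₀) := by
    have h3 : β * A₀ = -(A₀ᵀ * β) := by
      calc β * A₀ = β * A₀ * (α * β) := by rw [h1, Matrix.mul_one]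
        _ = β * (A₀ * α) * β := by simp only [Matrix.mul_assoc]
        _ = -(β * α * (A₀ᵀ * β)) := by
            rw [key]; simp only [Matrix.mul_assoc, Matrix.mul_neg, Matrix.neg_mul]
        _ = -(A₀ᵀ * β) := by rw [h2, Matrix.one_mul]
    rw [Matrix.transpose_mul, hβs]; rw [h3]; simp
  have hz' := spectrum.mem_iff.mp hz
  rw [Algebra.algebraMap_eq_smul_one] at hz'
  have hdet0 : (z • (1 : Matrix (Fin n) (Fin n) ℂ) - A₀.map Complex.ofReal).det = 0 := by
    by_contra h
    exact hz' ((Matrix.isUnit_iff_isUnit_det _).mpr (Ne.isUnit h))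
  obtain ⟨v, hv0, hv⟩ := (Matrix.exists_mulVec_eq_zero_iff).mpr hdet0
  have heig : (A₀.map Complex.ofReal) *ᵥ v = z • v := by
    rw [Matrix.sub_mulVec, Matrix.smul_mulVec, Matrix.one_mulVec, sub_eq_zero] at hv
    exact hv.symm
  exact aux_eigen_imaginary β A₀ hβs hβpd hSkew z v hv0 heig
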